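/- Let q be a prime power, let w ∈ F₂ be a non-trivial element of the free group on two generators, and let z ∈ SL(2,q) with z ≠ id and z ≠ -id. If z = w(x,y) for some x, y ∈ SL(2,q), then for every z' ∈ SL(2,q) with z' ≠ id, z' ≠ -id and tr(z') = tr(z), there exist x', y' ∈ SL(2,q) such that z' = w(x',y'). -/

import Mathlib

abbrev SL2 (F : Type) [CommRing F] := Matrix.SpecialLinearGroup (Fin 2) F

noncomputable def trSL {F : Type} [CommRing F] (x : SL2 F) : F :=
  Matrix.trace (x : Matrix (Fin 2) (Fin 2) F)

/-- Evaluation of a word `w` in the free group on two generators at `(x, y)`. -/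
def evalWord {G : Type} [Group G] (w : FreeGroup (Fin 2)) (x y : G) : G :=
  FreeGroup.lift ![x, y] w

section Aux

variable {F : Type} [Field F]

/-- Conjugation by an invertible matrix, as a group homomorphism on `SL2 F`. -/
noncomputable def conjSL (P : Matrix (Fin 2) (Fin 2) F) (hP : IsUnit P.det) :
    SL2 F →* SL2 F where
  toFun A := ⟨P * (A : Matrix (Fin 2) (Fin 2) F) * P⁻¹, by
    rw [Matrix.det_conj ((Matrix.isUnit_iff_isUnit_det P).2 hP)]; exact A.2⟩
  map_one' := by
    apply Subtype.ext
    show P * 1 * P⁻¹ = 1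
    rw [Matrix.mul_one, Matrix.mul_nonsing_inv P hP]
  map_mul' A B := by
    apply Subtype.ext
    show P * ((A : Matrix (Fin 2) (Fin 2) F) * B) * P⁻¹
        = (P * (A : Matrix (Fin 2) (Fin 2) F) * P⁻¹) * (P * (B : Matrix (Fin 2) (Fin 2) F) * P⁻¹)
    have key : ∀ X : Matrix (Fin 2) (Fin 2) F, P⁻¹ * (P * X) = X := fun X => by
      rw [← Matrix.mul_assoc, Matrix.nonsing_inv_mul P hP, Matrix.one_mul]
    simp only [Matrix.mul_assoc, key]

lemma hom_evalWord {G H : Type} [Group G] [Group H] (φ : G →* H)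
    (w : FreeGroup (Fin 2)) (x y : G) :
    φ (evalWord w x y) = evalWord w (φ x) (φ y) := by
  unfold evalWord
  have := FreeGroup.lift_unique (f := ![φ x, φ y]) (g := φ.comp (FreeGroup.lift ![x, y]))
    (by intro a; fin_cases a <;> simp) (x := w)
  simpa using this

/-- Any non-scalar matrix of determinant 1 is conjugate to the companion matrix of its
characteristic polynomial. -/
lemma companion' (a b c d : F) (hdet : a * d - b * c = 1)
    (hns : ¬ (c = 0 ∧ b = 0 ∧ a = d)) :
    ∃ P : Matrix (Fin 2) (Fin 2) F, IsUnit P.det ∧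
      !![a, b; c, d] * P = P * !![0, -1; 1, a + d] := by
  by_cases hc : c ≠ 0
  · refine ⟨!![1, a; 0, c], by simp [Matrix.det_fin_two, hc], ?_⟩
    ext i j
    fin_cases i <;> fin_cases j <;>
      simp [Matrix.mul_apply, Fin.sum_univ_two] <;>
      first | ring1 | linear_combination hdet | linear_combination -hdet
  by_cases hb : b ≠ 0
  · refine ⟨!![0, b; 1, d], by simp [Matrix.det_fin_two, hb], ?_⟩
    ext i j
    fin_cases i <;> fin_cases j <;>
      simp [Matrix.mul_apply, Fin.sum_univ_two] <;>
      first | ring1 | linear_combination hdet | linear_combination -hdet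
  · push_neg at hc hb
    have had : a ≠ d := fun h => hns ⟨hc, hb, h⟩
    refine ⟨!![1, a; 1, d], ?_, ?_⟩
    · have : (!![1, a; 1, d] : Matrix (Fin 2) (Fin 2) F).det = d - a := by
        simp [Matrix.det_fin_two]
      rw [this]
      exact isUnit_iff_ne_zero.2 (sub_ne_zero.2 (Ne.symm had))
    · ext i j
      fin_cases i <;> fin_cases j <;>
        simp [Matrix.mul_apply, Fin.sum_univ_two, hb, hc] <;>
        first
          | ring1
          | linear_combination hdet
          | linear_combination -hdet
          | linear_combination -b * hc
          | linear_combination -hdet - b * hc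

/-- An element of `SL2` different from `±1` is non-scalar. -/
lemma nonscalar (z : SL2 F) (hz1 : z ≠ 1) (hz2 : (z : Matrix (Fin 2) (Fin 2) F) ≠ -1) :
    ¬ ((z : Matrix (Fin 2) (Fin 2) F) 1 0 = 0 ∧ (z : Matrix (Fin 2) (Fin 2) F) 0 1 = 0 ∧
       (z : Matrix (Fin 2) (Fin 2) F) 0 0 = (z : Matrix (Fin 2) (Fin 2) F) 1 1) := by
  rintro ⟨hc, hb, had⟩
  have hdet := z.2
  rw [Matrix.det_fin_two, hb, hc, ← had] at hdet
  have : ((z : Matrix (Fin 2) (Fin 2) F) 0 0 - 1) *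
      ((z : Matrix (Fin 2) (Fin 2) F) 0 0 + 1) = 0 := by linear_combination hdet
  rcases mul_eq_zero.1 this with h | h
  · have ha : (z : Matrix (Fin 2) (Fin 2) F) 0 0 = 1 := by linear_combination h
    apply hz1
    apply Subtype.ext
    show (z : Matrix (Fin 2) (Fin 2) F) = 1
    ext i j
    fin_cases i <;> fin_cases j <;> simp [Matrix.one_apply, hb, hc, ha, ← had]
  · have ha : (z : Matrix (Fin 2) (Fin 2) F) 0 0 = -1 := by linear_combination h
    apply hz2
    ext i j
    fin_cases i <;> fin_cases j <;>
      simp [Matrix.neg_apply, Matrix.one_apply, hb, hc, ha, ← had]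

/-- A non-scalar element of `SL2` satisfies the companion equation. -/
lemma companion_of_SL (z : SL2 F) (hz1 : z ≠ 1) (hz2 : (z : Matrix (Fin 2) (Fin 2) F) ≠ -1) :
    ∃ P : Matrix (Fin 2) (Fin 2) F, IsUnit P.det ∧
      (z : Matrix (Fin 2) (Fin 2) F) * P = P * !![0, -1; 1, trSL z] := by
  have hdet := z.2
  rw [Matrix.det_fin_two] at hdet
  obtain ⟨P, hP, hPC⟩ := companion' ((z : Matrix (Fin 2) (Fin 2) F) 0 0)
    ((z : Matrix (Fin 2) (Fin 2) F) 0 1) ((z : Matrix (Fin 2) (Fin 2) F) 1 0)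
    ((z : Matrix (Fin 2) (Fin 2) F) 1 1) hdet (nonscalar z hz1 hz2)
  refine ⟨P, hP, ?_⟩
  rw [← Matrix.eta_fin_two (z : Matrix (Fin 2) (Fin 2) F)] at hPC
  have ht : trSL z = (z : Matrix (Fin 2) (Fin 2) F) 0 0 +
      (z : Matrix (Fin 2) (Fin 2) F) 1 1 := Matrix.trace_fin_two _
  rw [ht]
  exact hPC

end Aux

/-- If `z ≠ ±id` is a value of a non-trivial word `w` on `SL(2,q)`, then so is every
`z' ≠ ±id` with the same trace as `z`. -/
theorem word_value_of_eq_trace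
    (p e q : ℕ) (hp : p.Prime) (he : 1 ≤ e) (hq : q = p ^ e)
    (F : Type) [Field F] [Fintype F] (hF : Fintype.card F = q)
    (w : FreeGroup (Fin 2)) (hw : w ≠ 1)
    (z : SL2 F) (hz1 : z ≠ 1) (hz2 : (z : Matrix (Fin 2) (Fin 2) F) ≠ -1)
    (x y : SL2 F) (hz : z = evalWord w x y) :
    ∀ z' : SL2 F, z' ≠ 1 → (z' : Matrix (Fin 2) (Fin 2) F) ≠ -1 → trSL z' = trSL z →
      ∃ x' y' : SL2 F, z' = evalWord w x' y' := by
  intro z' hz1' hz2' htr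
  obtain ⟨P, hP, hPC⟩ := companion_of_SL z hz1 hz2
  obtain ⟨Q, hQ, hQC⟩ := companion_of_SL z' hz1' hz2'
  rw [htr] at hQC
  set M : Matrix (Fin 2) (Fin 2) F := (z : Matrix (Fin 2) (Fin 2) F) with hM
  set M' : Matrix (Fin 2) (Fin 2) F := (z' : Matrix (Fin 2) (Fin 2) F) with hM'
  set g : Matrix (Fin 2) (Fin 2) F := Q * P⁻¹ with hg
  have hgdet : IsUnit g.det := by
    rw [hg, Matrix.det_mul]
    exact hQ.mul (Matrix.isUnit_nonsing_inv_det P hP)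
  -- g conjugates M to M'
  have hconj : g * M * g⁻¹ = M' := by
    have hginv : g⁻¹ = P * Q⁻¹ := by
      rw [hg, Matrix.mul_inv_rev, Matrix.nonsing_inv_nonsing_inv P hP]
    have hC : P⁻¹ * (M * P) = !![0, -1; 1, trSL z] := by
      rw [hPC, ← Matrix.mul_assoc, Matrix.nonsing_inv_mul P hP, Matrix.one_mul]
    calc g * M * g⁻¹ = Q * (P⁻¹ * (M * P)) * Q⁻¹ := by
          rw [hg, hginv]; simp only [Matrix.mul_assoc]
      _ = Q * !![0, -1; 1, trSL z] * Q⁻¹ := by rw [hC]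
      _ = M' * Q * Q⁻¹ := by rw [← hQC]
      _ = M' := by
          rw [Matrix.mul_assoc, Matrix.mul_nonsing_inv Q hQ, Matrix.mul_one]
  refine ⟨conjSL g hgdet x, conjSL g hgdet y, ?_⟩
  rw [← hom_evalWord, ← hz]
  apply Subtype.ext
  exact hconj.symm
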